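/- For every real r with 1 ≤ r ≤ 2, we have (2/3 + 1/√8 + 1/√(2r)) − (2/√6 + 1/√12 + 1/√(3r)) > 0.0068. -/

import Mathlib

theorem stmt_7 (r : ℝ) (hr1 : 1 ≤ r) (hr2 : r ≤ 2) :
    (2 / 3 + 1 / Real.sqrt 8 + 1 / Real.sqrt (2 * r)) -
      (2 / Real.sqrt 6 + 1 / Real.sqrt 12 + 1 / Real.sqrt (3 * r)) > 0.0068 := by
  have hr0 : (0:ℝ) < r := lt_of_lt_of_le one_pos hr1
  set A := Real.sqrt 2 with hA
  set B := Real.sqrt 3 with hB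
  set s := Real.sqrt r with hs
  have hA0 : 0 < A := Real.sqrt_pos.mpr (by norm_num)
  have hB0 : 0 < B := Real.sqrt_pos.mpr (by norm_num)
  have hs0 : 0 < s := Real.sqrt_pos.mpr hr0
  have hA2 : A ^ 2 = 2 := Real.sq_sqrt (by norm_num)
  have hB2 : B ^ 2 = 3 := Real.sq_sqrt (by norm_num)
  have hsA : s ≤ A := Real.sqrt_le_sqrt hr2
  have hAB : A ≤ B := Real.sqrt_le_sqrt (by norm_num)
  have h2r : Real.sqrt (2 * r) = A * s := Real.sqrt_mul (by norm_num) r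
  have h3r : Real.sqrt (3 * r) = B * s := Real.sqrt_mul (by norm_num) r
  have h6 : Real.sqrt 6 = A * B := by
    rw [hA, hB, ← Real.sqrt_mul (by norm_num : (2:ℝ) ≥ 0)]; norm_num
  -- monotonicity step: 1/(A*s) - 1/(B*s) ≥ 1/(A*A) - 1/(B*A)
  have key : 1 / (A * s) - 1 / (B * s) ≥ 1 / (A * A) - 1 / (B * A) := by
    have h1 : 1 / (A * s) - 1 / (B * s) = (B - A) / (A * B) * (1 / s) := by
      field_simp
    have h2 : 1 / (A * A) - 1 / (B * A) = (B - A) / (A * B) * (1 / A) := by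
      field_simp
    rw [h1, h2]
    apply mul_le_mul_of_nonneg_left _ (div_nonneg (sub_nonneg.mpr hAB) (by positivity))
    exact one_div_le_one_div_of_le hs0 hsA
  -- rational bounds on sqrt values
  have h8u : Real.sqrt 8 ≤ 2.8284271248 := by
    have := Real.sqrt_le_sqrt (show (8:ℝ) ≤ 2.8284271248 ^ 2 by norm_num)
    rwa [Real.sqrt_sq (by norm_num)] at this
  have h6l : (2.4494897427 : ℝ) ≤ Real.sqrt 6 := by
    have := Real.sqrt_le_sqrt (show (2.4494897427:ℝ) ^ 2 ≤ 6 by norm_num)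
    rwa [Real.sqrt_sq (by norm_num)] at this
  have h12l : (3.4641016151 : ℝ) ≤ Real.sqrt 12 := by
    have := Real.sqrt_le_sqrt (show (3.4641016151:ℝ) ^ 2 ≤ 12 by norm_num)
    rwa [Real.sqrt_sq (by norm_num)] at this
  have h8p : (0:ℝ) < Real.sqrt 8 := Real.sqrt_pos.mpr (by norm_num)
  have h6p : (0:ℝ) < Real.sqrt 6 := Real.sqrt_pos.mpr (by norm_num)
  have h12p : (0:ℝ) < Real.sqrt 12 := Real.sqrt_pos.mpr (by norm_num)
  have hb8 : (1:ℝ) / 2.8284271248 ≤ 1 / Real.sqrt 8 :=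
    one_div_le_one_div_of_le h8p h8u
  have hb6 : 1 / Real.sqrt 6 ≤ 1 / 2.4494897427 :=
    one_div_le_one_div_of_le (by norm_num) h6l
  have hb12 : 1 / Real.sqrt 12 ≤ 1 / 3.4641016151 :=
    one_div_le_one_div_of_le (by norm_num) h12l
  -- rewrite the tail: 1/(A*A) - 1/(B*A) = 1/2 - 1/sqrt 6
  have htail : 1 / (A * A) - 1 / (B * A) = 1 / 2 - 1 / Real.sqrt 6 := by
    rw [h6]
    have : A * A = 2 := by nlinarith [hA2]
    rw [this, mul_comm B A]
  rw [h2r, h3r]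
  have hge := le_trans (le_of_eq htail.symm) key
  have e1 : 2 / Real.sqrt 6 = 2 * (1 / Real.sqrt 6) := by ring
  linarith [hb8, hb6, hb12, hge, e1]
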